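/- Let F_q be a finite field of odd characteristic p, let 1 < k ≤ q-1 with k | q-1, and let a_1,...,a_k be the k-th roots of unity in F_q. Define T_k = [(a_i² + a_i a_j + a_j²)^{(q-3)/2}]_{1≤i,j≤k}. Then det T_k = l_k · k^k in F_p, where l_k = ∏_{s=0}^{k-1} ∑_{r=0}^{⌊(q-3-s)/k⌋} T((q-3)/2, (q-3)/2 - s - kr), and T(n, j) denotes the trinomial coefficient, i.e., the coefficient of x^j in (x² + x + 1)^n shifted so that T(n,j) is the coefficient of x^j in (x + 1 + 1/x)^n. -/

import Mathlib

open Polynomial Finset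

section Aux

theorem aux_rev1 : (1 : ℤ[X]).reverse = 1 := by rw [← C_1, reverse_C]

theorem aux_rev111 : reverse (X^2+X+1 : ℤ[X]) = X^2+X+1 := by
  have h : (X^2+X+1 : ℤ[X]) = (X + C 1) * X + C 1 := by simp [C_1]; ring
  rw [h, reverse_add_C, reverse_mul_X, reverse_add_C]
  have h1 : (X : ℤ[X]).reverse = 1 := by
    have := reverse_mul_X (1 : ℤ[X]); rw [aux_rev1] at this; simpa using this
  have h2 : ((X + C 1) * X : ℤ[X]).natDegree = 2 := by compute_degree!
  have h3 : (((X:ℤ[X]) + 1) * X).natDegree = 2 := by compute_degree!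
  rw [h1]
  simp [h2, natDegree_X]
  rw [h3]; ring

theorem aux_revpow (n : ℕ) : reverse ((X^2+X+1 : ℤ[X])^n) = (X^2+X+1)^n := by
  induction n with
  | zero => simpa using aux_rev1
  | succ m ih => rw [pow_succ, reverse_mul_of_domain, ih, aux_rev111]

theorem aux_ndeg (n : ℕ) : natDegree ((X^2+X+1 : ℤ[X])^n) = 2*n := by
  rw [natDegree_pow]
  have : natDegree (X^2+X+1 : ℤ[X]) = 2 := by compute_degree!
  rw [this]; ring

theorem aux_symmcoeff (n t : ℕ) (ht : t ≤ 2*n) :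
    ((X^2+X+1 : ℤ[X])^n).coeff t = ((X^2+X+1 : ℤ[X])^n).coeff (2*n - t) := by
  conv_lhs => rw [← aux_revpow n]
  rw [coeff_reverse, aux_ndeg, revAt_le (by omega : t ≤ 2*n)]

variable {F : Type*} [Field F]

theorem aux_prodform {k : ℕ} (hk : 0 < k) (a : Fin k → F) (ha : Function.Injective a)
    (hroot : ∀ i, a i ^ k = 1) :
    (X ^ k - 1 : F[X]) = ∏ i, (X - C (a i)) := by
  have hd1 : natDegree (X ^ k - 1 : F[X]) = k := by
    simpa using natDegree_X_pow_sub_C (n := k) (r := (1:F))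
  have hd2 : natDegree (∏ i, (X - C (a i)) : F[X]) = k := by
    simpa using natDegree_prod_of_monic (univ : Finset (Fin k)) (fun i => X - C (a i))
      (fun i _ => monic_X_sub_C (a i))
  have hne : (X ^ k - 1 : F[X]) ≠ 0 := by
    intro h; rw [h] at hd1; simp at hd1; omega
  have hdeq : degree (X ^ k - 1 : F[X]) = degree (∏ i, (X - C (a i)) : F[X]) := by
    rw [degree_eq_natDegree hne, degree_eq_natDegree (by
      intro h; rw [h] at hd2; simp at hd2; omega), hd1, hd2]
  have hlc : leadingCoeff (X ^ k - 1 : F[X]) = leadingCoeff (∏ i, (X - C (a i)) : F[X]) := by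
    rw [(monic_prod_of_monic _ _ (fun i _ => monic_X_sub_C (a i))).leadingCoeff]
    simpa using (monic_X_pow_sub_C (1:F) (by omega : k ≠ 0)).leadingCoeff
  rw [← sub_eq_zero]
  by_contra hcon
  have hdeg : degree ((X ^ k - 1 : F[X]) - ∏ i, (X - C (a i))) < degree (X ^ k - 1 : F[X]) :=
    degree_sub_lt hdeq hne hlc
  apply hcon
  apply Polynomial.eq_zero_of_natDegree_lt_card_of_eval_eq_zero _ ha
  · intro i
    simp only [eval_sub, eval_pow, eval_X, eval_one, eval_prod, eval_C]
    rw [hroot i, Finset.prod_eq_zero (mem_univ i) (by simp)]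
    ring
  · rw [Fintype.card_fin]
    have := natDegree_lt_natDegree hcon hdeg
    omega

theorem aux_deriv_eval {k : ℕ} (a : Fin k → F)
    (hXk : (X ^ k - 1 : F[X]) = ∏ i, (X - C (a i))) (i : Fin k) :
    (k : F) * a i ^ (k-1) = ∏ j ∈ univ.erase i, (a i - a j) := by
  have hfac : (∏ j, (X - C (a j)) : F[X])
      = (X - C (a i)) * ∏ j ∈ univ.erase i, (X - C (a j)) :=
    (Finset.mul_prod_erase univ _ (mem_univ i)).symm
  have hder := congrArg derivative hXk
  rw [hfac] at hder
  simp only [derivative_mul, derivative_sub, derivative_X, derivative_C, derivative_one,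
    derivative_X_pow, sub_zero] at hder
  have := congrArg (eval (a i)) hder
  simpa [eval_prod] using this

theorem aux_scalar {k m : ℕ} (hk : 0 < k) (a : Fin k → F)
    (hXk : (X ^ k - 1 : F[X]) = ∏ i, (X - C (a i)))
    (ha0 : ∀ i, a i ≠ 0)
    (hm : ∀ j, a j ^ m = (a j ^ 2)⁻¹) :
    (∏ i, ∏ j ∈ Ioi i, (a j - a i)) *
      ((∏ j, a j ^ m) * ∏ i, ∏ j ∈ Ioi i, ((a j)⁻¹ - (a i)⁻¹)) = (k : F) ^ k := by
  set u := ∏ i, a i with hu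
  have hu2 : u ^ 2 = 1 := by
    have h0 := congrArg (eval 0) hXk
    simp only [eval_sub, eval_pow, eval_X, eval_one, eval_prod, eval_C, zero_sub] at h0
    rw [zero_pow (by omega : k ≠ 0), zero_sub] at h0
    have h2 : -1 = (-1) ^ k * u := h0.trans (by
      rw [show (∏ x : Fin k, -a x) = ∏ x : Fin k, (-1 * a x) from
        Finset.prod_congr rfl fun x _ => by ring]
      rw [Finset.prod_mul_distrib, Finset.prod_const, Finset.card_univ, Fintype.card_fin])
    calc u ^ 2 = ((-1:F)^k * u)^2 := by
          rw [mul_pow, ← pow_mul, mul_comm k 2, pow_mul]; norm_num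
      _ = (-1:F)^2 := by rw [← h2]
      _ = 1 := by norm_num
  have hu0 : u ≠ 0 := Finset.prod_ne_zero_iff.mpr fun i _ => ha0 i
  have hsplit : ∀ i j : Fin k, (a j)⁻¹ - (a i)⁻¹ = (a i - a j) * ((a i)⁻¹ * (a j)⁻¹) := by
    intro i j
    field_simp [ha0 i, ha0 j]
  have hQ : (∏ i, ∏ j ∈ Ioi i, ((a j)⁻¹ - (a i)⁻¹))
      = (∏ i, ∏ j ∈ Ioi i, (a i - a j)) * ∏ i, ∏ j ∈ Ioi i, ((a i)⁻¹ * (a j)⁻¹) := by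
    simp_rw [hsplit, Finset.prod_mul_distrib]
  have hPQ1 : (∏ i, ∏ j ∈ Ioi i, (a j - a i)) * (∏ i, ∏ j ∈ Ioi i, (a i - a j))
      = (k:F)^k * u ^ (k-1) := by
    rw [← Finset.prod_mul_distrib]
    simp_rw [← Finset.prod_mul_distrib]
    have hcomm : ∀ i : Fin k, (∏ j ∈ Ioi i, (a j - a i) * (a i - a j))
        = ∏ j ∈ Ioi i, (a i - a j) * (a j - a i) :=
      fun i => Finset.prod_congr rfl fun j _ => mul_comm _ _
    rw [show (∏ i, ∏ j ∈ Ioi i, ((a j - a i) * (a i - a j)))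
        = ∏ i, ∏ j ∈ Ioi i, ((a i - a j) * (a j - a i)) from
      Finset.prod_congr rfl fun i _ => hcomm i]
    rw [Finset.prod_prod_Ioi_mul_eq_prod_prod_off_diag (fun x y => a y - a x)]
    simp only [Finset.compl_singleton]
    transitivity (∏ i, ((k:F) * a i ^ (k-1)))
    · exact Finset.prod_congr rfl fun i _ => by
        convert (aux_deriv_eval a hXk i).symm using 2
    rw [Finset.prod_mul_distrib,
      Finset.prod_const, Finset.card_univ, Fintype.card_fin, Finset.prod_pow]
  have hQ2 : (∏ i, ∏ j ∈ Ioi i, ((a i)⁻¹ * (a j)⁻¹)) = (u⁻¹) ^ k * u := by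
    have h1 : ∀ i : Fin k, (∏ j ∈ Ioi i, (a i)⁻¹ * (a j)⁻¹)
        = ∏ j ∈ Ioi i, (a j)⁻¹ * (a i)⁻¹ :=
      fun i => Finset.prod_congr rfl fun j _ => mul_comm _ _
    have hin : ∀ i : Fin k, (∏ j ∈ univ.erase i, (a j)⁻¹)
        = (∏ j, (a j)⁻¹) * a i := by
      intro i
      have h := Finset.prod_erase_mul univ (fun j => (a j)⁻¹) (mem_univ i)
      calc (∏ j ∈ univ.erase i, (a j)⁻¹)
          = (∏ j ∈ univ.erase i, (a j)⁻¹) * ((a i)⁻¹ * a i) := by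
            rw [inv_mul_cancel₀ (ha0 i), mul_one]
        _ = (∏ j, (a j)⁻¹) * a i := by rw [← mul_assoc, h]
    rw [show (∏ i, ∏ j ∈ Ioi i, ((a i)⁻¹ * (a j)⁻¹))
        = ∏ i, ∏ j ∈ Ioi i, ((a j)⁻¹ * (a i)⁻¹) from
      Finset.prod_congr rfl fun i _ => h1 i]
    rw [Finset.prod_prod_Ioi_mul_eq_prod_prod_off_diag (fun x y => (a x)⁻¹)]
    simp only [Finset.compl_singleton]
    transitivity (∏ i, ((∏ j, (a j)⁻¹) * a i))
    · exact Finset.prod_congr rfl fun i _ => by convert hin i using 2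
    rw [Finset.prod_mul_distrib, Finset.prod_const, Finset.card_univ,
      Fintype.card_fin, Finset.prod_inv_distrib]
  have hAm : (∏ j, a j ^ m) = 1 := by
    simp_rw [hm]
    rw [Finset.prod_inv_distrib, Finset.prod_pow, ← hu, hu2, inv_one]
  rw [hQ, hAm, one_mul]
  calc (∏ i, ∏ j ∈ Ioi i, (a j - a i)) *
      ((∏ i, ∏ j ∈ Ioi i, (a i - a j)) * ∏ i, ∏ j ∈ Ioi i, ((a i)⁻¹ * (a j)⁻¹))
      = ((∏ i, ∏ j ∈ Ioi i, (a j - a i)) * (∏ i, ∏ j ∈ Ioi i, (a i - a j)))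
        * ∏ i, ∏ j ∈ Ioi i, ((a i)⁻¹ * (a j)⁻¹) := by ring
    _ = (k:F)^k * u ^ (k-1) * ((u⁻¹) ^ k * u) := by rw [hPQ1, hQ2]
    _ = (k:F)^k * (u ^ (k-1) * u) * (u ^ k)⁻¹ := by rw [inv_pow]; ring
    _ = (k:F)^k * u ^ k * (u ^ k)⁻¹ := by rw [← pow_succ, Nat.sub_add_cancel hk]
    _ = (k:F)^k := by rw [mul_assoc, mul_inv_cancel₀ (pow_ne_zero _ hu0), mul_one]

end Aux

/-- The trinomial coefficient `binom(n,r)₂`: the coefficient of `x^(n+r)` in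
`(x² + x + 1)^n`, defined to be `0` when `n + r < 0`. -/
noncomputable def trinomialCoeff (n : ℕ) (r : ℤ) : ℤ :=
  if 0 ≤ (n : ℤ) + r then
    ((Polynomial.X ^ 2 + Polynomial.X + 1 : Polynomial ℤ) ^ n).coeff ((n : ℤ) + r).toNat
  else 0

theorem aux_coeffsum {F : Type*} [Field F] {k n : ℕ} (hk : 0 < k) {s : ℕ} (hs : s < k) :
    ∑ t ∈ (range (2*n+1)).filter (fun t => t % k = s),
        ((((X^2+X+1 : ℤ[X])^n).coeff t : ℤ) : F)
      = ∑ r ∈ range ((2*n - s)/k + 1), (trinomialCoeff n ((n:ℤ) - s - k*r) : F) := by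
  by_cases hs2 : s ≤ 2*n
  · have hterm : ∀ r ∈ range ((2*n - s)/k + 1),
        (trinomialCoeff n ((n:ℤ) - s - k*r) : F)
          = ((((X^2+X+1 : ℤ[X])^n).coeff (s + k*r) : ℤ) : F) := by
      intro r hr
      rw [mem_range] at hr
      have hkr : k * r ≤ 2*n - s := by
        have h1 : r ≤ (2*n - s)/k := by omega
        calc k * r ≤ k * ((2*n-s)/k) := Nat.mul_le_mul_left _ h1
          _ ≤ 2*n - s := Nat.mul_div_le _ _
      have hle : s + k*r ≤ 2*n := by omega
      rw [trinomialCoeff, if_pos (by push_cast; omega)]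
      have htn : ((n : ℤ) + ((n:ℤ) - s - k*r)).toNat = 2*n - (s + k*r) := by omega
      rw [htn, ← aux_symmcoeff n (s + k*r) hle]
    calc ∑ t ∈ (range (2*n+1)).filter (fun t => t % k = s),
          ((((X^2+X+1 : ℤ[X])^n).coeff t : ℤ) : F)
        = ∑ r ∈ range ((2*n - s)/k + 1),
            ((((X^2+X+1 : ℤ[X])^n).coeff (s + k*r) : ℤ) : F) := by
          refine Finset.sum_nbij' (i := fun t => (t - s)/k) (j := fun r => s + k*r)
            ?_ ?_ ?_ ?_ ?_
          · intro t ht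
            simp only [mem_filter, mem_range] at ht ⊢
            obtain ⟨ht1, ht2⟩ := ht
            have hdm := Nat.div_add_mod t k
            have h2 : t - s = k * (t/k) := by omega
            rw [h2, Nat.mul_div_cancel_left _ hk]
            have h3 : (t/k) * k ≤ 2*n - s := by rw [mul_comm]; omega
            exact Nat.lt_succ_of_le ((Nat.le_div_iff_mul_le hk).mpr h3)
          · intro r hr
            simp only [mem_range] at hr
            have hkr : k * r ≤ 2*n - s := by
              have h1 : r ≤ (2*n - s)/k := by omega
              calc k * r ≤ k * ((2*n-s)/k) := Nat.mul_le_mul_left _ h1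
                _ ≤ 2*n - s := Nat.mul_div_le _ _
            simp only [mem_filter, mem_range]
            exact ⟨by omega, by rw [Nat.add_mul_mod_self_left, Nat.mod_eq_of_lt hs]⟩
          · intro t ht
            simp only [mem_filter, mem_range] at ht
            obtain ⟨ht1, ht2⟩ := ht
            have hdm := Nat.div_add_mod t k
            have h2 : t - s = k * (t/k) := by omega
            show s + k * ((t - s)/k) = t
            rw [h2, Nat.mul_div_cancel_left _ hk]
            omega
          · intro r hr
            show (s + k*r - s)/k = r
            rw [Nat.add_sub_cancel_left, Nat.mul_div_cancel_left _ hk]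
          · intro t ht
            simp only [mem_filter, mem_range] at ht
            obtain ⟨ht1, ht2⟩ := ht
            have hdm := Nat.div_add_mod t k
            have h2 : t - s = k * (t/k) := by omega
            have h3 : s + k * ((t - s)/k) = t := by
              rw [h2, Nat.mul_div_cancel_left _ hk]; omega
            show ((((X^2+X+1 : ℤ[X])^n).coeff t : ℤ) : F)
              = ((((X^2+X+1 : ℤ[X])^n).coeff (s + k*((t - s)/k)) : ℤ) : F)
            rw [h3]
      _ = ∑ r ∈ range ((2*n - s)/k + 1), (trinomialCoeff n ((n:ℤ) - s - k*r) : F) :=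
          (Finset.sum_congr rfl hterm).symm
  · have h1 : (range (2*n+1)).filter (fun t => t % k = s) = ∅ := by
      refine Finset.filter_false_of_mem ?_
      intro t ht
      rw [mem_range] at ht
      have := Nat.mod_le t k
      omega
    have h2 : 2*n - s = 0 := by omega
    rw [h1, h2]
    simp only [Finset.sum_empty, Nat.zero_div, zero_add, Finset.range_one, Finset.sum_singleton]
    rw [trinomialCoeff, if_neg (by omega)]
    simp

theorem stmt_15 (F : Type*) [Field F] [Fintype F] (q p k : ℕ)
    (hq : Fintype.card F = q) [Fact p.Prime] [CharP F p] (hp2 : p ≠ 2)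
    (hk1 : 1 < k) (hk2 : k ≤ q - 1) (hdvd : k ∣ q - 1)
    (a : Fin k → F) (ha : Function.Injective a) (hroot : ∀ i, a i ^ k = 1) :
    Matrix.det (Matrix.of fun i j : Fin k =>
        (a i ^ 2 + a i * a j + a j ^ 2) ^ ((q - 3) / 2))
      = (∏ s ∈ Finset.range k, ∑ r ∈ Finset.range ((q - 3 - s) / k + 1),
          (trinomialCoeff ((q - 3) / 2)
            ((((q - 3) / 2 : ℕ) : ℤ) - (s : ℤ) - (k : ℤ) * (r : ℤ)) : F)) *
        (k : F) ^ k := by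
  classical
  set n := (q - 3) / 2 with hn
  -- basic numerics
  obtain ⟨m, hpp, hcard⟩ := FiniteField.card F p
  have hqodd : Odd q := by
    rw [← hq, hcard]
    exact (hpp.odd_of_ne_two hp2).pow
  have hq3 : 3 ≤ q := by omega
  have h2n : 2 * n = q - 3 := by
    obtain ⟨w, hw⟩ := hqodd
    rw [hn]; omega
  have hk0 : 0 < k := by omega
  have ha0 : ∀ i, a i ≠ 0 := by
    intro i hai
    have := hroot i
    rw [hai, zero_pow (by omega : k ≠ 0)] at this
    exact zero_ne_one this
  have hq1 : ∀ i, a i ^ (q - 1) = 1 := by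
    obtain ⟨c, hc⟩ := hdvd
    intro i
    rw [hc, pow_mul, hroot i, one_pow]
  have hm : ∀ j, a j ^ (q - 3) = (a j ^ 2)⁻¹ := by
    intro j
    refine eq_inv_of_mul_eq_one_left ?_
    rw [← pow_add, show q - 3 + 2 = q - 1 by omega]
    exact hq1 j
  have hXk := aux_prodform hk0 a ha hroot
  -- the polynomial over F
  set P : F[X] := ((X : F[X])^2 + X + 1)^n with hP
  have hPmap : P = ((X^2+X+1 : ℤ[X])^n).map (Int.castRingHom F) := by
    simp [hP, Polynomial.map_pow]
  have hCoe : ∀ t, P.coeff t = ((((X^2+X+1 : ℤ[X])^n).coeff t : ℤ) : F) := by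
    intro t
    rw [hPmap, coeff_map]
    rfl
  have hPdeg : P.natDegree = 2*n := by
    rw [hP, natDegree_pow]
    have : (X^2+X+1 : F[X]).natDegree = 2 := by compute_degree!
    rw [this]; ring
  set Cc : ℕ → F := fun s => ∑ t ∈ (range (2*n+1)).filter (fun t => t % k = s),
    ((((X^2+X+1 : ℤ[X])^n).coeff t : ℤ) : F) with hCc
  -- matrix factorization
  set A : Matrix (Fin k) (Fin k) F := Matrix.vandermonde a with hA
  set D : Matrix (Fin k) (Fin k) F := Matrix.diagonal (fun s : Fin k => Cc (s : ℕ)) with hD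
  set B : Matrix (Fin k) (Fin k) F :=
    Matrix.of (fun (s j : Fin k) => a j ^ (q-3) * ((a j)⁻¹) ^ (s:ℕ)) with hB
  have hM : (Matrix.of fun i j : Fin k =>
      (a i ^ 2 + a i * a j + a j ^ 2) ^ n) = A * D * B := by
    ext i j
    have hx : (a i * (a j)⁻¹) ^ k = 1 := by
      rw [mul_pow, hroot i, inv_pow, hroot j]; simp
    set x := a i * (a j)⁻¹ with hxdef
    have hxmod : ∀ t : ℕ, x ^ t = x ^ (t % k) := by
      intro t
      conv_lhs => rw [← Nat.div_add_mod t k]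
      rw [pow_add, pow_mul, hx, one_pow, one_mul]
    have hxa : a j * x = a i := by
      rw [hxdef, mul_comm (a i), ← mul_assoc, mul_inv_cancel₀ (ha0 j), one_mul]
    have hfac : a i ^ 2 + a i * a j + a j ^ 2 = a j ^ 2 * (x^2 + x + 1) := by
      have : a j ^ 2 * (x^2 + x + 1) = (a j * x)^2 + a j * (a j * x) + a j ^ 2 := by ring
      rw [this, hxa]; ring
    have heval : (x^2 + x + 1)^n = P.eval x := by
      simp [hP]
    have hsum : P.eval x = ∑ s ∈ range k, Cc s * x ^ s := by
      rw [eval_eq_sum_range' (by omega : P.natDegree < 2*n+1) x]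
      rw [← Finset.sum_fiberwise_of_maps_to (g := fun t => t % k)
        (fun t _ => mem_range.mpr (Nat.mod_lt t hk0)) (fun t => P.coeff t * x ^ t)]
      refine Finset.sum_congr rfl fun s hs => ?_
      rw [mem_range] at hs
      rw [hCc, Finset.sum_mul]
      refine Finset.sum_congr rfl fun t ht => ?_
      rw [mem_filter] at ht
      rw [hCoe t, hxmod t, ht.2]
    have entry : (a i ^ 2 + a i * a j + a j ^ 2) ^ n
        = ∑ s ∈ range k, a i ^ s * Cc s * (a j ^ (q-3) * ((a j)⁻¹) ^ s) := by
      rw [hfac, mul_pow, ← pow_mul, heval, hsum, Finset.mul_sum]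
      refine Finset.sum_congr rfl fun s hs => ?_
      rw [show x ^ s = a i ^ s * ((a j)⁻¹)^s by rw [hxdef, mul_pow]]
      rw [show 2 * n = q - 3 from h2n]
      ring
    show (a i ^ 2 + a i * a j + a j ^ 2) ^ n = (A * D * B) i j
    rw [Matrix.mul_assoc, Matrix.mul_apply]
    simp only [hA, hD, hB, Matrix.diagonal_mul, Matrix.vandermonde_apply, Matrix.of_apply]
    rw [entry, ← Fin.sum_univ_eq_sum_range
      (fun s => a i ^ s * Cc s * (a j ^ (q-3) * ((a j)⁻¹) ^ s)) k]
    refine Finset.sum_congr rfl fun s _ => ?_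
    ring
  -- determinants
  have hdetB : B.det = (∏ j, a j ^ (q-3)) * ∏ i, ∏ j ∈ Ioi i, ((a j)⁻¹ - (a i)⁻¹) := by
    have hBt : B = Matrix.transpose (Matrix.diagonal (fun j => a j ^ (q-3))
        * Matrix.vandermonde (fun j => (a j)⁻¹)) := by
      ext s j
      simp [hB, Matrix.transpose_apply, Matrix.diagonal_mul, Matrix.vandermonde_apply]
    rw [hBt, Matrix.det_transpose, Matrix.det_mul, Matrix.det_diagonal,
      Matrix.det_vandermonde]
  have hdet : Matrix.det (Matrix.of fun i j : Fin k =>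
      (a i ^ 2 + a i * a j + a j ^ 2) ^ n)
      = (∏ s : Fin k, Cc (s:ℕ)) * (k : F) ^ k := by
    rw [hM, Matrix.det_mul, Matrix.det_mul, hA, Matrix.det_vandermonde, hD,
      Matrix.det_diagonal, hdetB]
    rw [show (∏ i, ∏ j ∈ Ioi i, (a j - a i)) * (∏ s : Fin k, Cc (s:ℕ))
        * ((∏ j, a j ^ (q-3)) * ∏ i, ∏ j ∈ Ioi i, ((a j)⁻¹ - (a i)⁻¹))
        = (∏ s : Fin k, Cc (s:ℕ)) * ((∏ i, ∏ j ∈ Ioi i, (a j - a i))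
          * ((∏ j, a j ^ (q-3)) * ∏ i, ∏ j ∈ Ioi i, ((a j)⁻¹ - (a i)⁻¹))) from by ring]
    rw [aux_scalar hk0 a hXk ha0 hm]
  rw [hdet]
  congr 1
  rw [← Fin.prod_univ_eq_prod_range (fun s => ∑ r ∈ range ((q - 3 - s) / k + 1),
    (trinomialCoeff n ((n:ℤ) - s - k*r) : F)) k]
  refine Finset.prod_congr rfl fun s _ => ?_
  have hcs := aux_coeffsum (F := F) (n := n) hk0 (s := (s:ℕ)) s.isLt
  show (∑ t ∈ (range (2*n+1)).filter (fun t => t % k = (s:ℕ)),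
      ((((X^2+X+1 : ℤ[X])^n).coeff t : ℤ) : F))
    = ∑ r ∈ range ((q - 3 - (s:ℕ)) / k + 1), (trinomialCoeff n ((n:ℤ) - (s:ℕ) - k*r) : F)
  rw [hcs, show 2*n - (s:ℕ) = q - 3 - (s:ℕ) from by omega]
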